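/- Fix integers M > 1 and 1 ≤ A < M, an alphabet 𝒜 ⊆ {0,…,M−1} of size A, and the canonical alphabet 𝒜̄ = {0,…,A−1}. Let G_{n,𝒜} be the Cantor function of the n-iterate C_n(1, M, 𝒜) based in [0,1] (G_{n,𝒜}(x) = |C_n(1,M,𝒜) ∩ [0,x]|·(M/A)^n). Then for all x ≤ y: G_{n,𝒜}(y) − G_{n,𝒜}(x) ≤ G_{n,𝒜̄}(y − x). -/

import Mathlib

open MeasureTheory

/-- Discrete `n`-iterate Cantor set with base `M` and alphabet `S`. -/
def cantorD (M : ℕ) (S : Finset ℕ) (n : ℕ) : Set ℕ :=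
  {x | ∃ a : Fin n → ℕ, (∀ j, a j ∈ S) ∧ x = ∑ j, a j * M ^ (j : ℕ)}

/-- Continuous `n`-iterate Cantor set with base `M`, alphabet `S`, based in `[0, L]`. -/
def cantorC (M : ℕ) (S : Finset ℕ) (L : ℝ) (n : ℕ) : Set ℝ :=
  ⋃ x ∈ cantorD M S n, Set.Icc (L / M ^ n * x) (L / M ^ n * x + L / M ^ n)

/-- The Cantor function of the `n`-iterate with base `M` and alphabet `S` based in `[0,1]`,
normalized by the measure `(A/M)^n` of the iterate, where `A` is the alphabet size. -/
noncomputable def cantorFun (M A : ℕ) (S : Finset ℕ) (n : ℕ) (x : ℝ) : ℝ :=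
  if x ≤ 0 then 0
  else (volume (cantorC M S 1 n ∩ Set.Icc 0 x)).toReal * ((M : ℝ) / A) ^ n

def Dfin (M : ℕ) (S : Finset ℕ) : ℕ → Finset ℕ
  | 0 => {0}
  | n+1 => (S ×ˢ Dfin M S n).image fun p => p.1 + M * p.2

def cnt (M : ℕ) (S : Finset ℕ) (n : ℕ) (lo hi : ℤ) : ℕ :=
  ((Dfin M S n).filter fun d : ℕ => lo ≤ (d : ℤ) ∧ (d : ℤ) < hi).card

def cdiv (M : ℕ) (c : ℤ) : ℤ := (c - 1) / M + 1

lemma cdiv_le_iff {M : ℕ} (hM : 0 < M) (c d : ℤ) : cdiv M c ≤ d ↔ c ≤ M * d := by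
  have hM' : (0:ℤ) < M := by exact_mod_cast hM
  have key : d ≤ (c-1)/M ↔ d * M ≤ c - 1 := Int.le_ediv_iff_mul_le hM'
  unfold cdiv
  rw [mul_comm]
  constructor
  · intro hh
    have h3 : ¬ d ≤ (c-1)/M := by omega
    have h4 : ¬ (d * M ≤ c - 1) := fun hc => h3 (key.mpr hc)
    linarith [not_le.mp h4]
  · intro hh
    have h4 : ¬ (d * M ≤ c - 1) := by linarith
    have h3 : ¬ d ≤ (c-1)/M := fun hc => h4 (key.mp hc)
    omega

lemma cnt_mono {M : ℕ} {S : Finset ℕ} {n : ℕ} {lo hi lo' hi' : ℤ}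
    (h1 : lo' ≤ lo) (h2 : hi ≤ hi') : cnt M S n lo hi ≤ cnt M S n lo' hi' := by
  apply Finset.card_le_card
  intro d hd
  simp only [Finset.mem_filter] at hd ⊢
  exact ⟨hd.1, le_trans h1 hd.2.1, lt_of_lt_of_le hd.2.2 h2⟩

lemma cnt_split {M : ℕ} {S : Finset ℕ} {n : ℕ} {lo mid hi : ℤ}
    (h1 : lo ≤ mid) (h2 : mid ≤ hi) :
    cnt M S n lo mid + cnt M S n mid hi = cnt M S n lo hi := by
  classical
  unfold cnt
  have heq : (Dfin M S n).filter (fun d : ℕ => lo ≤ (d:ℤ) ∧ (d:ℤ) < hi)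
      = ((Dfin M S n).filter fun d : ℕ => lo ≤ (d:ℤ) ∧ (d:ℤ) < mid)
        ∪ ((Dfin M S n).filter fun d : ℕ => mid ≤ (d:ℤ) ∧ (d:ℤ) < hi) := by
    rw [← Finset.filter_or]
    apply Finset.filter_congr
    intro d _
    constructor
    · intro hd; omega
    · intro hd; omega
  rw [heq, Finset.card_union_of_disjoint]
  rw [Finset.disjoint_left]
  intro a ha hb
  simp only [Finset.mem_filter] at ha hb
  omega

lemma cnt_zero_of_le {M : ℕ} {S : Finset ℕ} {n : ℕ} {lo hi : ℤ} (h : hi ≤ lo) :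
    cnt M S n lo hi = 0 := by
  unfold cnt
  rw [Finset.card_eq_zero, Finset.filter_eq_empty_iff]
  intro d _
  omega

lemma Dfin_succ_biUnion {M : ℕ} {S : Finset ℕ} {n : ℕ} :
    Dfin M S (n+1) = S.biUnion fun a => (Dfin M S n).image fun d => a + M * d := by
  ext x
  simp only [Dfin, Finset.mem_image, Finset.mem_product, Finset.mem_biUnion, Prod.exists]
  constructor
  · rintro ⟨a, d, ⟨ha, hd⟩, rfl⟩
    exact ⟨a, ha, d, hd, rfl⟩
  · rintro ⟨a, ha, d, hd, rfl⟩
    exact ⟨a, d, ⟨ha, hd⟩, rfl⟩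

lemma cnt_succ {M : ℕ} (hM : 0 < M) {S : Finset ℕ} (hS : S ⊆ Finset.range M)
    (n : ℕ) (lo hi : ℤ) :
    cnt M S (n+1) lo hi = ∑ a ∈ S, cnt M S n (cdiv M (lo - a)) (cdiv M (hi - a)) := by
  classical
  unfold cnt
  rw [Dfin_succ_biUnion, Finset.filter_biUnion, Finset.card_biUnion]
  · apply Finset.sum_congr rfl
    intro a ha
    have haM : a < M := Finset.mem_range.mp (hS ha)
    have hinj : Function.Injective fun d : ℕ => a + M * d := by
      intro d d' hdd
      simp only [add_right_inj] at hdd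
      exact Nat.eq_of_mul_eq_mul_left hM hdd
    rw [Finset.filter_image, Finset.card_image_of_injective _ hinj]
    apply congrArg
    apply Finset.filter_congr
    intro d _
    have key1 : lo - a ≤ M * d ↔ cdiv M (lo - a) ≤ (d:ℤ) := (cdiv_le_iff hM _ _).symm
    have key2 : hi - a ≤ M * d ↔ cdiv M (hi - a) ≤ (d:ℤ) := (cdiv_le_iff hM _ _).symm
    push_cast
    constructor
    · rintro ⟨h1, h2⟩
      refine ⟨key1.mp (by linarith), ?_⟩
      by_contra hcon
      push_neg at hcon
      have := key2.mpr hcon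
      linarith
    · rintro ⟨h1, h2⟩
      have h1' := key1.mpr h1
      have h2' : ¬ (hi - a ≤ M * d) := fun hc => absurd (key2.mp hc) (by omega)
      constructor <;> linarith [not_le.mp h2']
  · intro a ha b hb hab
    apply Finset.disjoint_left.mpr
    intro x hx1 hx2
    simp only [Finset.mem_filter, Finset.filter_image, Finset.mem_image] at hx1 hx2
    obtain ⟨d, -, rfl⟩ := hx1
    obtain ⟨d', -, he⟩ := hx2
    have haM : a < M := Finset.mem_range.mp (hS ha)
    have hbM : b < M := Finset.mem_range.mp (hS hb)
    have h1 : (a + M * d) % M = a := by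
      rw [Nat.add_mul_mod_self_left, Nat.mod_eq_of_lt haM]
    have h2 : (b + M * d') % M = b := by
      rw [Nat.add_mul_mod_self_left, Nat.mod_eq_of_lt hbM]
    rw [he] at h2
    exact hab (by omega)

lemma cdiv_add {M : ℕ} (hM : 0 < M) (c m : ℤ) :
    cdiv M (c + m) = cdiv M c + m / M + (if (M:ℤ) ≤ (c - 1) % M + m % M then 1 else 0) := by
  have hM' : (0:ℤ) < M := by exact_mod_cast hM
  have h1 : 0 ≤ (c-1) % M := Int.emod_nonneg _ (ne_of_gt hM')
  have h2 : (c-1) % M < M := Int.emod_lt_of_pos _ hM'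
  have h3 : 0 ≤ m % M := Int.emod_nonneg _ (ne_of_gt hM')
  have h4 : m % M < M := Int.emod_lt_of_pos _ hM'
  unfold cdiv
  have e1 : c + m - 1 = ((c-1) % M + m % M) + ((c-1)/M + m/M) * M := by
    have q1 := Int.mul_ediv_add_emod (c-1) M
    have q2 := Int.mul_ediv_add_emod m M
    ring_nf
    ring_nf at q1 q2
    linarith
  rw [e1, Int.add_mul_ediv_right _ _ (ne_of_gt hM')]
  split_ifs with hcase
  · have e2 : (c-1)%M + m%M = ((c-1)%M + m%M - M) + 1 * M := by ring
    have : ((c-1)%M + m%M) / M = 1 := by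
      rw [e2, Int.add_mul_ediv_right _ _ (ne_of_gt hM'),
        Int.ediv_eq_zero_of_lt (by omega) (by omega)]
      ring
    omega
  · have : ((c-1)%M + m%M) / M = 0 := Int.ediv_eq_zero_of_lt (by omega) (by omega)
    omega

lemma cdiv_neg_small {M : ℕ} (hM : 0 < M) (a : ℤ) (h0 : 0 ≤ a) (hA : a < M) :
    cdiv M (-a) = 0 := by
  have hM' : (0:ℤ) < M := by exact_mod_cast hM
  unfold cdiv
  have e1 : -a - 1 = ((M:ℤ) - 1 - a) + (-1) * M := by ring
  rw [e1, Int.add_mul_ediv_right _ _ (ne_of_gt hM'),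
    Int.ediv_eq_zero_of_lt (by omega) (by omega)]
  ring

lemma emod_neg_small {M : ℕ} (hM : 0 < M) (a : ℤ) (h0 : 0 ≤ a) (hA : a < M) :
    (-a - 1) % M = (M:ℤ) - 1 - a := by
  have hM' : (0:ℤ) < M := by exact_mod_cast hM
  have e1 : -a - 1 = ((M:ℤ) - 1 - a) + M * (-1) := by ring
  rw [e1, Int.add_mul_emod_self_left, Int.emod_eq_of_lt (by omega) (by omega)]

lemma card_extra_le {M : ℕ} (hM : 0 < M) {S : Finset ℕ} (hS : S ⊆ Finset.range M)
    (lo r : ℤ) (hr0 : 0 ≤ r) (hrM : r < M) :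
    (S.filter fun a : ℕ => (M:ℤ) ≤ (lo - a - 1) % M + r).card ≤ r.toNat := by
  classical
  have hM' : (0:ℤ) < M := by exact_mod_cast hM
  have := Finset.card_le_card_of_injOn (f := fun a : ℕ => ((lo - a - 1) % M - ((M:ℤ) - r)).toNat)
    (s := S.filter fun a : ℕ => (M:ℤ) ≤ (lo - a - 1) % M + r) (t := Finset.range r.toNat)
    ?_ ?_
  · simpa using this
  · intro a ha
    simp only [Finset.mem_coe, Finset.mem_filter] at ha
    have h2 : (lo - a - 1) % M < M := Int.emod_lt_of_pos _ hM'
    have h1 : 0 ≤ (lo - a - 1) % M := Int.emod_nonneg _ (ne_of_gt hM')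
    simp only [Finset.mem_coe, Finset.mem_range]
    omega
  · intro a ha b hb hab
    simp only [Finset.coe_filter, Set.mem_setOf_eq] at ha hb
    have haM : a < M := Finset.mem_range.mp (hS ha.1)
    have hbM : b < M := Finset.mem_range.mp (hS hb.1)
    have h1 : 0 ≤ (lo - a - 1) % M := Int.emod_nonneg _ (ne_of_gt hM')
    have h1' : 0 ≤ (lo - b - 1) % M := Int.emod_nonneg _ (ne_of_gt hM')
    simp only at hab
    have heq : (lo - a - 1) % M = (lo - b - 1) % M := by omega
    have hz : ((lo - a - 1) - (lo - b - 1)) % M = 0 :=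
      Int.emod_eq_emod_iff_emod_sub_eq_zero.mp heq
    have he2 : ((b:ℤ) - a) % M = 0 := by
      have : (lo - a - 1) - (lo - b - 1) = (b:ℤ) - a := by ring
      rwa [this] at hz
    have hdvd : (M:ℤ) ∣ ((b:ℤ) - a) := Int.dvd_of_emod_eq_zero he2
    have := Int.eq_zero_of_abs_lt_dvd hdvd (by rw [abs_lt]; constructor <;> omega)
    omega

lemma cnt_le_canonical {M A : ℕ} (hM : 0 < M) (hAM : A ≤ M)
    {S : Finset ℕ} (hS : S ⊆ Finset.range M) (hcard : S.card = A) :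
    ∀ n lo hi, cnt M S n lo hi ≤ cnt M (Finset.range A) n 0 (hi - lo) := by
  classical
  have hS' : Finset.range A ⊆ Finset.range M := Finset.range_subset_range.mpr hAM
  intro n
  induction n with
  | zero =>
    intro lo hi
    simp only [cnt, Dfin, Finset.filter_singleton]
    split_ifs with h1 h2 h2
    · exact le_refl _
    · exfalso; push_cast at h1 h2; simp only [true_and] at h2; omega
    · simp
    · simp
  | succ n ih =>
    intro lo hi
    by_cases hlh : hi ≤ lo
    · rw [cnt_zero_of_le hlh]; exact Nat.zero_le _
    push_neg at hlh
    have hM' : (0:ℤ) < M := by exact_mod_cast hM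
    set m : ℤ := hi - lo with hm
    have hm0 : 0 < m := by omega
    set q : ℤ := m / M with hq
    set r : ℤ := m % M with hr
    have hr0 : 0 ≤ r := Int.emod_nonneg _ (ne_of_gt hM')
    have hrM : r < M := Int.emod_lt_of_pos _ hM'
    have hq0 : 0 ≤ q := Int.ediv_nonneg (by omega) (by omega)
    rw [cnt_succ hM hS, cnt_succ hM hS']
    set B0 := cnt M (Finset.range A) n 0 q with hB0
    set B1 := cnt M (Finset.range A) n 0 (q+1) with hB1
    have hB01 : B0 ≤ B1 := cnt_mono le_rfl (by omega)
    -- LHS bound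
    have step1 : ∀ a ∈ S, cnt M S n (cdiv M (lo - a)) (cdiv M (hi - a))
        ≤ if (M:ℤ) ≤ (lo - a - 1) % M + r then B1 else B0 := by
      intro a ha
      have hwin : cdiv M (hi - a) = cdiv M (lo - a) + q
          + (if (M:ℤ) ≤ ((lo - a) - 1) % M + r then 1 else 0) := by
        have h5 : hi - a = (lo - a) + m := by ring
        rw [h5, cdiv_add hM, hq, hr]
      have h6 := ih (cdiv M (lo - a)) (cdiv M (hi - a))
      refine le_trans h6 ?_
      rw [hwin]
      have h7 : lo - (a:ℤ) - 1 = (lo - a) - 1 := by ring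
      rw [← h7] at *
      split_ifs with hca
    
      · exact le_of_eq (by rw [hB1]; congr 1; ring)
      · exact le_of_eq (by rw [hB0]; congr 1; ring)
    have lhs_le : ∑ a ∈ S, cnt M S n (cdiv M (lo - a)) (cdiv M (hi - a))
        ≤ ∑ a ∈ S, if (M:ℤ) ≤ (lo - a - 1) % M + r then B1 else B0 :=
      Finset.sum_le_sum step1
    -- count extras
    set e := (S.filter fun a : ℕ => (M:ℤ) ≤ (lo - a - 1) % M + r).card with he
    have hsum1 : ∑ a ∈ S, (if (M:ℤ) ≤ (lo - a - 1) % M + r then B1 else B0)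
        = e * B1 + (A - e) * B0 := by
      rw [Finset.sum_ite, Finset.sum_const, Finset.sum_const, smul_eq_mul, smul_eq_mul]
      congr 2
      have := Finset.card_filter_add_card_filter_not
        (s := S) (p := fun a : ℕ => (M:ℤ) ≤ (lo - a - 1) % M + r)
      omega
    have heA : e ≤ A := by rw [he, ← hcard]; exact Finset.card_filter_le _ _
    have her : e ≤ r.toNat := card_extra_le hM hS lo r hr0 hrM
    -- RHS value
    have rhs_eq : ∑ a ∈ Finset.range A, cnt M (Finset.range A) n (cdiv M (0 - a)) (cdiv M (m - a))
        = min r.toNat A * B1 + (A - min r.toNat A) * B0 := by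
      have hterm : ∀ a ∈ Finset.range A,
          cnt M (Finset.range A) n (cdiv M (0 - a)) (cdiv M (m - a))
            = if (a:ℤ) < r then B1 else B0 := by
        intro a ha
        have haA : a < A := Finset.mem_range.mp ha
        have haM : (a:ℤ) < M := by exact_mod_cast lt_of_lt_of_le haA hAM
        have ha0 : (0:ℤ) ≤ a := Int.ofNat_nonneg a
        have e0 : cdiv M (0 - a) = 0 := by
          rw [show (0:ℤ) - a = -(a:ℤ) by ring]
          exact cdiv_neg_small hM _ ha0 haM
        have e2 : cdiv M (m - a) = q + (if (a:ℤ) < r then 1 else 0) := by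
          rw [show m - (a:ℤ) = (-(a:ℤ)) + m by ring, cdiv_add hM,
            cdiv_neg_small hM _ ha0 haM, ← hq, ← hr]
          rw [show (-(a:ℤ) - 1) = (-(a:ℤ)) - 1 by ring, emod_neg_small hM _ ha0 haM]
          have : ((M:ℤ) ≤ (M:ℤ) - 1 - a + r) ↔ ((a:ℤ) < r) := by omega
          simp only [this]
          ring_nf
        rw [e0, e2]
        split_ifs with hc
        · rw [hB1]
        · rw [hB0]; norm_num
      rw [Finset.sum_congr rfl hterm, Finset.sum_ite, Finset.sum_const, Finset.sum_const,
        smul_eq_mul, smul_eq_mul]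
      have hfe : ((Finset.range A).filter fun a : ℕ => (a:ℤ) < r) = Finset.range (min r.toNat A) := by
        ext a
        simp only [Finset.mem_filter, Finset.mem_range, lt_min_iff]
        omega
      have := Finset.card_filter_add_card_filter_not
        (s := Finset.range A) (p := fun a : ℕ => (a:ℤ) < r)
      rw [hfe] at *
      simp only [Finset.card_range] at *
      congr 2
      omega
    rw [rhs_eq]
    refine le_trans lhs_le (le_trans (le_of_eq hsum1) ?_)
    -- e * B1 + (A - e) * B0 ≤ min r.toNat A * B1 + (A - min r.toNat A) * B0
    set t := min r.toNat A with ht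
    have het : e ≤ t := le_min her heA
    have htA : t ≤ A := min_le_right _ _
    zify [heA, htA]
    nlinarith [mul_le_mul_of_nonneg_left (show (B0:ℤ) ≤ B1 by exact_mod_cast hB01)
      (show (0:ℤ) ≤ (t:ℤ) - e by omega)]

lemma sum_fin_succ (M : ℕ) (n : ℕ) (a : Fin (n+1) → ℕ) :
    ∑ j, a j * M ^ (j:ℕ) = a 0 + M * ∑ j : Fin n, a j.succ * M ^ (j:ℕ) := by
  rw [Fin.sum_univ_succ]
  simp only [Fin.val_zero, pow_zero, mul_one, Fin.val_succ]
  rw [Finset.mul_sum]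
  congr 1
  apply Finset.sum_congr rfl
  intro j _
  rw [pow_succ]
  ring

lemma cantorD_eq (M : ℕ) (S : Finset ℕ) : ∀ n, cantorD M S n = ↑(Dfin M S n) := by
  intro n
  induction n with
  | zero =>
    ext x
    simp only [cantorD, Dfin, Set.mem_setOf_eq, Finset.coe_singleton, Set.mem_singleton_iff]
    constructor
    · rintro ⟨a, -, rfl⟩
      simp
    · rintro rfl
      exact ⟨fun j => j.elim0, fun j => j.elim0, by simp⟩
  | succ n ih =>
    ext x
    simp only [cantorD, Set.mem_setOf_eq, Finset.mem_coe, Dfin_succ_biUnion,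
      Finset.mem_biUnion, Finset.mem_image]
    constructor
    · rintro ⟨a, ha, rfl⟩
      refine ⟨a 0, ha 0, ∑ j : Fin n, a j.succ * M ^ (j:ℕ), ?_, (sum_fin_succ M n a).symm⟩
      have hd : (∑ j : Fin n, a j.succ * M ^ (j:ℕ)) ∈ cantorD M S n :=
        ⟨fun j => a j.succ, fun j => ha j.succ, rfl⟩
      rw [ih] at hd
      exact hd
    · rintro ⟨a0, ha0, d, hd, rfl⟩
      have hd' : d ∈ cantorD M S n := by rw [ih]; exact hd
      obtain ⟨b, hb, rfl⟩ := hd'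
      refine ⟨Fin.cons a0 b, ?_, ?_⟩
      · intro j
        refine Fin.cases ?_ ?_ j
        · simpa using ha0
        · intro i; simpa using hb i
      · rw [sum_fin_succ]
        simp

lemma ell_eq {X Y : ℝ} (hXY : X ≤ Y) (huv : ⌈X⌉ ≤ ⌊Y⌋) (d : ℤ) :
    max 0 (min ((d:ℝ)+1) Y - max (d:ℝ) X)
      = ((⌈X⌉:ℝ) - X) * (if ⌈X⌉-1 ≤ d ∧ d < ⌈X⌉ then 1 else 0)
        + (if ⌈X⌉ ≤ d ∧ d < ⌊Y⌋ then 1 else 0)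
        + (Y - (⌊Y⌋:ℝ)) * (if ⌊Y⌋ ≤ d ∧ d < ⌊Y⌋+1 then 1 else 0) := by
  have hXu : X ≤ (⌈X⌉:ℝ) := Int.le_ceil X
  have huX : ((⌈X⌉:ℝ)) < X + 1 := Int.ceil_lt_add_one X
  have hvY : ((⌊Y⌋:ℝ)) ≤ Y := Int.floor_le Y
  have hYv : Y < (⌊Y⌋:ℝ) + 1 := Int.lt_floor_add_one Y
  have huv' : ((⌈X⌉:ℝ)) ≤ ((⌊Y⌋:ℝ)) := by exact_mod_cast huv
  rcases lt_trichotomy d (⌈X⌉ - 1) with h | h | h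
  · have hd : ((d:ℝ)) ≤ (⌈X⌉:ℝ) - 2 := by
      have h' : ((d:ℝ)) ≤ (((⌈X⌉ - 2 : ℤ)):ℝ) := by exact_mod_cast (show d ≤ ⌈X⌉-2 by omega)
      push_cast at h'
      linarith
    rw [if_neg (by omega), if_neg (by omega), if_neg (by omega), max_eq_left]
    · ring
    · have h1 : min ((d:ℝ)+1) Y ≤ (d:ℝ)+1 := min_le_left _ _
      have h2 : X ≤ max (d:ℝ) X := le_max_right _ _
      linarith
  · have hd : ((d:ℝ)) = (⌈X⌉:ℝ) - 1 := by
      have h' : ((d:ℝ)) = (((⌈X⌉ - 1 : ℤ)):ℝ) := by exact_mod_cast h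
      push_cast at h'
      linarith
    rw [if_pos (by omega), if_neg (by omega), if_neg (by omega)]
    have e1 : max ((d:ℝ)) X = X := max_eq_right (by linarith)
    have e2 : min ((d:ℝ)+1) Y = (d:ℝ)+1 := min_eq_left (by linarith)
    rw [e1, e2, max_eq_right (by linarith)]
    rw [hd]
    ring
  · by_cases h2 : d < ⌊Y⌋
    · have hud : ((⌈X⌉:ℝ)) ≤ (d:ℝ) := by exact_mod_cast (by omega : ⌈X⌉ ≤ d)
      have hdv : ((d:ℝ)) + 1 ≤ ((⌊Y⌋:ℝ)) := by
        have h' : (((d+1):ℤ):ℝ) ≤ ((⌊Y⌋:ℝ)) := by exact_mod_cast (show d + 1 ≤ ⌊Y⌋ by omega)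
        push_cast at h'
        linarith
      rw [if_neg (by omega), if_pos ⟨by omega, h2⟩, if_neg (by omega)]
      have e1 : max ((d:ℝ)) X = (d:ℝ) := max_eq_left (by linarith)
      have e2 : min ((d:ℝ)+1) Y = (d:ℝ)+1 := min_eq_left (by linarith)
      rw [e1, e2, max_eq_right (by linarith)]
      ring
    · by_cases h3 : d = ⌊Y⌋
      · have hd : ((d:ℝ)) = ((⌊Y⌋:ℝ)) := by exact_mod_cast h3
        rw [if_neg (by omega), if_neg (by omega), if_pos (by omega)]
        have e1 : max ((d:ℝ)) X = (d:ℝ) := max_eq_left (by linarith)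
        have e2 : min ((d:ℝ)+1) Y = Y := min_eq_right (by linarith)
        rw [e1, e2, max_eq_right (by linarith), hd]
        ring
      · have hd : ((⌊Y⌋:ℝ)) + 1 ≤ (d:ℝ) := by
          have h' : (((⌊Y⌋+1):ℤ):ℝ) ≤ ((d:ℝ)) := by exact_mod_cast (show ⌊Y⌋ + 1 ≤ d by omega)
          push_cast at h'
          linarith
        rw [if_neg (by omega), if_neg (by omega), if_neg (by omega), max_eq_left]
        · ring
        · have q1 : min ((d:ℝ)+1) Y ≤ Y := min_le_right _ _
          have q2 : (d:ℝ) ≤ max (d:ℝ) X := le_max_left _ _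
          linarith

lemma ell_eq' {X Y : ℝ} (hXY : X ≤ Y) (huv : ⌊Y⌋ = ⌈X⌉ - 1) (d : ℤ) :
    max 0 (min ((d:ℝ)+1) Y - max (d:ℝ) X)
      = (Y - X) * (if ⌊Y⌋ ≤ d ∧ d < ⌊Y⌋+1 then 1 else 0) := by
  have hXu : X ≤ (⌈X⌉:ℝ) := Int.le_ceil X
  have huX : ((⌈X⌉:ℝ)) < X + 1 := Int.ceil_lt_add_one X
  have hvY : ((⌊Y⌋:ℝ)) ≤ Y := Int.floor_le Y
  have hYv : Y < (⌊Y⌋:ℝ) + 1 := Int.lt_floor_add_one Y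
  have hvu : ((⌊Y⌋:ℝ)) = ((⌈X⌉:ℝ)) - 1 := by
    have h' : ((⌊Y⌋:ℝ)) = (((⌈X⌉ - 1 : ℤ)):ℝ) := by exact_mod_cast huv
    push_cast at h'
    linarith
  rcases lt_trichotomy d ⌊Y⌋ with h | h | h
  · have hd : ((d:ℝ)) + 1 ≤ ((⌊Y⌋:ℝ)) := by
      have h' : (((d+1):ℤ):ℝ) ≤ ((⌊Y⌋:ℝ)) := by exact_mod_cast (show d + 1 ≤ ⌊Y⌋ by omega)
      push_cast at h'
      linarith
    rw [if_neg (by omega), max_eq_left]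
    · ring
    · have h1 : min ((d:ℝ)+1) Y ≤ (d:ℝ)+1 := min_le_left _ _
      have h2 : X ≤ max (d:ℝ) X := le_max_right _ _
      linarith
  · have hd : ((d:ℝ)) = ((⌊Y⌋:ℝ)) := by exact_mod_cast h
    rw [if_pos (by omega)]
    have e1 : max ((d:ℝ)) X = X := max_eq_right (by linarith)
    have e2 : min ((d:ℝ)+1) Y = Y := min_eq_right (by linarith)
    rw [e1, e2, max_eq_right (by linarith)]
    ring
  · have hd : ((⌊Y⌋:ℝ)) + 1 ≤ (d:ℝ) := by
      have h' : (((⌊Y⌋+1):ℤ):ℝ) ≤ ((d:ℝ)) := by exact_mod_cast (show ⌊Y⌋ + 1 ≤ d by omega)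
      push_cast at h'
      linarith
    rw [if_neg (by omega), max_eq_left]
    · ring
    · have q1 : min ((d:ℝ)+1) Y ≤ Y := min_le_right _ _
      have q2 : (d:ℝ) ≤ max (d:ℝ) X := le_max_left _ _
      linarith

lemma sum_ell (M : ℕ) (S : Finset ℕ) (n : ℕ) {X Y : ℝ} (hXY : X ≤ Y) (huv : ⌈X⌉ ≤ ⌊Y⌋) :
    ∑ d ∈ Dfin M S n, max 0 (min ((d:ℝ)+1) Y - max (d:ℝ) X)
      = ((⌈X⌉:ℝ) - X) * (cnt M S n (⌈X⌉-1) ⌈X⌉ : ℕ)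
        + (cnt M S n ⌈X⌉ ⌊Y⌋ : ℕ)
        + (Y - (⌊Y⌋:ℝ)) * (cnt M S n ⌊Y⌋ (⌊Y⌋+1) : ℕ) := by
  have key : ∀ d : ℕ, max 0 (min ((d:ℝ)+1) Y - max (d:ℝ) X)
      = ((⌈X⌉:ℝ) - X) * (if ⌈X⌉-1 ≤ (d:ℤ) ∧ (d:ℤ) < ⌈X⌉ then 1 else 0)
        + (if ⌈X⌉ ≤ (d:ℤ) ∧ (d:ℤ) < ⌊Y⌋ then 1 else 0)
        + (Y - (⌊Y⌋:ℝ)) * (if ⌊Y⌋ ≤ (d:ℤ) ∧ (d:ℤ) < ⌊Y⌋+1 then 1 else 0) := by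
    intro d
    have h := ell_eq hXY huv (d:ℤ)
    push_cast at h
    exact h
  rw [Finset.sum_congr rfl (fun d _ => key d)]
  rw [Finset.sum_add_distrib, Finset.sum_add_distrib, ← Finset.mul_sum, ← Finset.mul_sum]
  have e1 : ∑ d ∈ Dfin M S n, (if ⌈X⌉-1 ≤ (d:ℤ) ∧ (d:ℤ) < ⌈X⌉ then (1:ℝ) else 0)
      = (cnt M S n (⌈X⌉-1) ⌈X⌉ : ℕ) := by
    rw [Finset.sum_boole]; rfl
  have e2 : ∑ d ∈ Dfin M S n, (if ⌈X⌉ ≤ (d:ℤ) ∧ (d:ℤ) < ⌊Y⌋ then (1:ℝ) else 0)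
      = (cnt M S n ⌈X⌉ ⌊Y⌋ : ℕ) := by
    rw [Finset.sum_boole]; rfl
  have e3 : ∑ d ∈ Dfin M S n, (if ⌊Y⌋ ≤ (d:ℤ) ∧ (d:ℤ) < ⌊Y⌋+1 then (1:ℝ) else 0)
      = (cnt M S n ⌊Y⌋ (⌊Y⌋+1) : ℕ) := by
    rw [Finset.sum_boole]; rfl
  rw [e1, e2, e3]

lemma sum_ell' (M : ℕ) (S : Finset ℕ) (n : ℕ) {X Y : ℝ} (hXY : X ≤ Y) (huv : ⌊Y⌋ = ⌈X⌉ - 1) :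
    ∑ d ∈ Dfin M S n, max 0 (min ((d:ℝ)+1) Y - max (d:ℝ) X)
      = (Y - X) * (cnt M S n ⌊Y⌋ (⌊Y⌋+1) : ℕ) := by
  have key : ∀ d : ℕ, max 0 (min ((d:ℝ)+1) Y - max (d:ℝ) X)
      = (Y - X) * (if ⌊Y⌋ ≤ (d:ℤ) ∧ (d:ℤ) < ⌊Y⌋+1 then 1 else 0) := by
    intro d
    have h := ell_eq' hXY huv (d:ℤ)
    push_cast at h
    exact h
  rw [Finset.sum_congr rfl (fun d _ => key d)]
  rw [← Finset.mul_sum]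
  congr 1
  rw [Finset.sum_boole]; rfl

lemma core_unit {M A : ℕ} (hM : 0 < M) (hAM : A ≤ M) {S : Finset ℕ}
    (hS : S ⊆ Finset.range M) (hcard : S.card = A) (n : ℕ) {X Y : ℝ} (hXY : X ≤ Y) :
    ∑ d ∈ Dfin M S n, max 0 (min ((d:ℝ)+1) Y - max (d:ℝ) X)
      ≤ ∑ d ∈ Dfin M (Finset.range A) n, max 0 (min ((d:ℝ)+1) (Y-X) - max (d:ℝ) 0) := by
  have h0YX : (0:ℝ) ≤ Y - X := by linarith
  have hm0 : 0 ≤ ⌊Y - X⌋ := Int.floor_nonneg.mpr h0YX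
  have hc0 : ⌈(0:ℝ)⌉ = 0 := Int.ceil_zero
  set m : ℤ := ⌊Y - X⌋ with hmdef
  set θ : ℝ := Y - X - m with hθdef
  have hθ0 : 0 ≤ θ := by
    have := Int.floor_le (Y - X); rw [hθdef]; linarith
  have hθ1 : θ < 1 := by
    have := Int.lt_floor_add_one (Y - X); rw [hθdef]; linarith
  -- RHS value
  have hRHS : ∑ d ∈ Dfin M (Finset.range A) n, max 0 (min ((d:ℝ)+1) (Y-X) - max (d:ℝ) 0)
      = (cnt M (Finset.range A) n 0 m : ℕ) + θ * (cnt M (Finset.range A) n m (m+1) : ℕ) := by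
    rw [sum_ell M (Finset.range A) n h0YX
      (by rw [hc0]; exact Int.floor_nonneg.mpr h0YX), hc0, ← hmdef, hθdef]
    push_cast
    ring
  rw [hRHS]
  set B0 : ℕ := cnt M (Finset.range A) n 0 m with hB0
  set Bm : ℕ := cnt M (Finset.range A) n m (m+1) with hBm
  set B1 : ℕ := cnt M (Finset.range A) n 0 (m+1) with hB1
  have hsplitB : B0 + Bm = B1 := cnt_split hm0 (by omega)
  set u : ℤ := ⌈X⌉ with hu
  set v : ℤ := ⌊Y⌋ with hv
  have hvu1 : u - 1 ≤ v := by
    have h1 : ⌈X⌉ ≤ ⌊X⌋ + 1 := Int.ceil_le_floor_add_one X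
    have h2 : ⌊X⌋ ≤ ⌊Y⌋ := Int.floor_mono hXY
    omega
  have hXu : X ≤ (u:ℝ) := Int.le_ceil X
  have huX : ((u:ℝ)) < X + 1 := Int.ceil_lt_add_one X
  have hvY : ((v:ℝ)) ≤ Y := Int.floor_le Y
  have hYv : Y < (v:ℝ) + 1 := Int.lt_floor_add_one Y
  by_cases huv : u ≤ v
  · rw [sum_ell M S n hXY huv]
    set C1 : ℕ := cnt M S n (u-1) u with hC1
    set C2 : ℕ := cnt M S n u v with hC2
    set C3 : ℕ := cnt M S n v (v+1) with hC3
    have hs12 : C1 + C2 = cnt M S n (u-1) v := cnt_split (by omega) (by omega)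
    have hs23 : C2 + C3 = cnt M S n u (v+1) := cnt_split (by omega) (by omega)
    have hs123 : C1 + (C2 + C3) = cnt M S n (u-1) (v+1) := by
      rw [hs23]; exact cnt_split (by omega) (by omega)
    have hm1 : v - u ≤ m := by
      rw [hmdef]
      apply Int.le_floor.mpr
      push_cast
      linarith
    have hm2 : m ≤ v - u + 1 := by
      have : m < v - u + 2 := by
        rw [hmdef]
        apply Int.floor_lt.mpr
        push_cast
        linarith
      omega
    set α : ℝ := (u:ℝ) - X with hα
    set β : ℝ := Y - (v:ℝ) with hβ
    have hα0 : 0 ≤ α := by rw [hα]; linarith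
    have hα1 : α < 1 := by rw [hα]; linarith
    have hβ0 : 0 ≤ β := by rw [hβ]; linarith
    have hβ1 : β < 1 := by rw [hβ]; linarith
    rcases (by omega : m = v - u ∨ m = v - u + 1) with hc | hc
    · -- θ = α + β
      have hθe : θ = α + β := by
        rw [hθdef, hα, hβ, hc]
        push_cast
        ring
      have hb2 : C2 ≤ B0 := by
        rw [hC2, hB0]
        have hx := cnt_le_canonical hM hAM hS hcard n u v
        rwa [show v - u = m by omega] at hx
      have hb12 : C1 + C2 ≤ B1 := by
        rw [hs12, hB1]
        have hx := cnt_le_canonical hM hAM hS hcard n (u-1) v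
        rwa [show v - (u-1) = m + 1 by omega] at hx
      have hb23 : C2 + C3 ≤ B1 := by
        rw [hs23, hB1]
        have hx := cnt_le_canonical hM hAM hS hcard n u (v+1)
        rwa [show v + 1 - u = m + 1 by omega] at hx
      have p1 : α * ((C1:ℝ) + C2) ≤ α * B1 :=
        mul_le_mul_of_nonneg_left (by exact_mod_cast hb12) hα0
      have p2 : β * ((C2:ℝ) + C3) ≤ β * B1 :=
        mul_le_mul_of_nonneg_left (by exact_mod_cast hb23) hβ0
      have p3 : (1 - θ) * (C2:ℝ) ≤ (1 - θ) * B0 :=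
        mul_le_mul_of_nonneg_left (by exact_mod_cast hb2) (by linarith)
      have hBsplit : (B0:ℝ) + Bm = B1 := by exact_mod_cast hsplitB
      have hBm' : (Bm:ℝ) = (B1:ℝ) - B0 := by linarith
      rw [hθe] at p3 ⊢
      rw [hBm']
      linarith [p1, p2, p3]
    · -- θ = α + β - 1
      have hθe : θ = α + β - 1 := by
        rw [hθdef, hα, hβ, hc]
        push_cast
        ring
      have hb123 : C1 + (C2 + C3) ≤ B1 := by
        rw [hs123, hB1]
        have hx := cnt_le_canonical hM hAM hS hcard n (u-1) (v+1)
        rwa [show v + 1 - (u-1) = m + 1 by omega] at hx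
      have hb12 : C1 + C2 ≤ B0 := by
        rw [hs12, hB0]
        have hx := cnt_le_canonical hM hAM hS hcard n (u-1) v
        rwa [show v - (u-1) = m by omega] at hx
      have hb23 : C2 + C3 ≤ B0 := by
        rw [hs23, hB0]
        have hx := cnt_le_canonical hM hAM hS hcard n u (v+1)
        rwa [show v + 1 - u = m by omega] at hx
      have hb123' : C1 + C2 + C3 ≤ B1 := by rw [Nat.add_assoc]; exact hb123
      have p1 : θ * ((C1:ℝ) + C2 + C3) ≤ θ * B1 :=
        mul_le_mul_of_nonneg_left (by exact_mod_cast hb123') hθ0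
      have p2 : (1 - β) * ((C1:ℝ) + C2) ≤ (1 - β) * B0 :=
        mul_le_mul_of_nonneg_left (by exact_mod_cast hb12) (by linarith)
      have p3 : (1 - α) * ((C2:ℝ) + C3) ≤ (1 - α) * B0 :=
        mul_le_mul_of_nonneg_left (by exact_mod_cast hb23) (by linarith)
      have hBsplit : (B0:ℝ) + Bm = B1 := by exact_mod_cast hsplitB
      have hBm' : (Bm:ℝ) = (B1:ℝ) - B0 := by linarith
      rw [hθe] at p1 ⊢
      rw [hBm']
      linarith [p1, p2, p3]
  · -- v = u - 1
    have hveq : v = u - 1 := by omega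
    rw [sum_ell' M S n hXY hveq]
    have hm00 : m = 0 := by
      have h1 : Y - X < 1 := by
        have hveq' : ((v:ℝ)) = (u:ℝ) - 1 := by exact_mod_cast hveq
        linarith
      rw [hmdef]
      exact Int.floor_eq_zero_iff.mpr ⟨h0YX, h1⟩
    have hb : cnt M S n v (v+1) ≤ Bm := by
      rw [hBm]
      have hx := cnt_le_canonical hM hAM hS hcard n v (v+1)
      rwa [show v + 1 - v = m + 1 by omega, show (0:ℤ) = m by omega] at hx
    have hθe : θ = Y - X := by
      rw [hθdef, hm00]
      push_cast
      ring
    have hp := mul_le_mul_of_nonneg_left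
      (show ((cnt M S n v (v+1) : ℕ):ℝ) ≤ (Bm:ℝ) by exact_mod_cast hb) h0YX
    have hB0nn : (0:ℝ) ≤ (B0:ℝ) := Nat.cast_nonneg _
    rw [← hθe] at hp ⊢
    linarith

lemma cantorC_eq (M : ℕ) (S : Finset ℕ) (n : ℕ) :
    cantorC M S 1 n
      = ⋃ d ∈ Dfin M S n, Set.Icc ((1:ℝ)/(M:ℝ)^n * d) ((1:ℝ)/(M:ℝ)^n * d + 1/(M:ℝ)^n) := by
  rw [cantorC, cantorD_eq, Finset.set_biUnion_coe]

lemma scaled_core {M A : ℕ} (hM : 0 < M) (hAM : A ≤ M) {S : Finset ℕ}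
    (hS : S ⊆ Finset.range M) (hcard : S.card = A) (n : ℕ)
    {h : ℝ} (hh : 0 < h) {a b : ℝ} (hab : a ≤ b) :
    ∑ d ∈ Dfin M S n, max 0 (min (h*(d:ℝ)+h) b - max (h*(d:ℝ)) a)
      ≤ ∑ d ∈ Dfin M (Finset.range A) n,
          max 0 (min (h*(d:ℝ)+h) (b-a) - max (h*(d:ℝ)) 0) := by
  have e : ∀ (d : ℕ) (p q : ℝ), max 0 (min (h*(d:ℝ)+h) p - max (h*(d:ℝ)) q)
      = h * max 0 (min ((d:ℝ)+1) (p/h) - max (d:ℝ) (q/h)) := by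
    intro d p q
    rw [mul_max_of_nonneg _ _ (le_of_lt hh), mul_zero, mul_sub,
      mul_min_of_nonneg _ _ (le_of_lt hh), mul_max_of_nonneg _ _ (le_of_lt hh),
      mul_div_cancel₀ _ (ne_of_gt hh), mul_div_cancel₀ _ (ne_of_gt hh), mul_add, mul_one]
  have hdiv : b/h - a/h = (b-a)/h := by ring
  have hz : (0:ℝ) = (0:ℝ)/h := by ring
  have hXY : a/h ≤ b/h := by gcongr
  calc ∑ d ∈ Dfin M S n, max 0 (min (h*(d:ℝ)+h) b - max (h*(d:ℝ)) a)
      = h * ∑ d ∈ Dfin M S n, max 0 (min ((d:ℝ)+1) (b/h) - max (d:ℝ) (a/h)) := by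
        rw [Finset.mul_sum]
        exact Finset.sum_congr rfl fun d _ => e d b a
    _ ≤ h * ∑ d ∈ Dfin M (Finset.range A) n,
          max 0 (min ((d:ℝ)+1) (b/h - a/h) - max (d:ℝ) 0) := by
        apply mul_le_mul_of_nonneg_left _ (le_of_lt hh)
        exact core_unit hM hAM hS hcard n hXY
    _ = ∑ d ∈ Dfin M (Finset.range A) n,
          max 0 (min (h*(d:ℝ)+h) (b-a) - max (h*(d:ℝ)) 0) := by
        rw [Finset.mul_sum]
        refine Finset.sum_congr rfl fun d _ => ?_
        have e2 : min ((d:ℝ)+1) (b/h - a/h) - max (d:ℝ) 0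
            = min ((d:ℝ)+1) ((b-a)/h) - max (d:ℝ) ((0:ℝ)/h) := by
          rw [hdiv, ← hz]
        rw [e2, ← e d (b-a) 0]

lemma ofReal_max0 (t : ℝ) : ENNReal.ofReal (max 0 t) = ENNReal.ofReal t := by
  rcases le_total t 0 with ht | ht
  · rw [max_eq_left ht, ENNReal.ofReal_zero, eq_comm, ENNReal.ofReal_eq_zero]
    exact ht
  · rw [max_eq_right ht]

lemma vol_le {M A : ℕ} (hM : 0 < M) (hAM : A ≤ M) {S : Finset ℕ}
    (hS : S ⊆ Finset.range M) (hcard : S.card = A) (n : ℕ) {a b : ℝ} (hab : a ≤ b) :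
    volume (cantorC M S 1 n ∩ Set.Icc a b)
      ≤ volume (cantorC M (Finset.range A) 1 n ∩ Set.Icc 0 (b - a)) := by
  have hM0 : (0:ℝ) < (M:ℝ) := by exact_mod_cast hM
  have hh : (0:ℝ) < 1/(M:ℝ)^n := by positivity
  set h : ℝ := 1/(M:ℝ)^n with hhdef
  have up : volume (cantorC M S 1 n ∩ Set.Icc a b)
      ≤ ENNReal.ofReal (∑ d ∈ Dfin M S n,
          max 0 (min (h * d + h) b - max (h * d) a)) := by
    rw [cantorC_eq, Set.iUnion₂_inter]
    refine le_trans (measure_biUnion_finset_le _ _) ?_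
    rw [ENNReal.ofReal_sum_of_nonneg (fun d _ => le_max_left 0 _)]
    apply Finset.sum_le_sum
    intro d _
    rw [Set.Icc_inter_Icc, Real.volume_Icc, ← ofReal_max0]
  have lodisj : Set.PairwiseDisjoint ↑(Dfin M (Finset.range A) n)
      (fun d : ℕ => Set.Ico (h * d) (h * d + h) ∩ Set.Icc 0 (b - a)) := by
    intro i _ j _ hij
    apply Set.disjoint_left.mpr
    intro x hx1 hx2
    obtain ⟨⟨hi1, hi2⟩, -⟩ := hx1
    obtain ⟨⟨hj1, hj2⟩, -⟩ := hx2
    rcases Nat.lt_or_ge i j with hlt | hge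
    · have hij1 : ((i:ℝ)) + 1 ≤ (j:ℝ) := by exact_mod_cast hlt
      have := mul_le_mul_of_nonneg_left hij1 (le_of_lt hh)
      nlinarith
    · have hlt : j < i := by omega
      have hij1 : ((j:ℝ)) + 1 ≤ (i:ℝ) := by exact_mod_cast hlt
      have := mul_le_mul_of_nonneg_left hij1 (le_of_lt hh)
      nlinarith
  have lo : ENNReal.ofReal (∑ d ∈ Dfin M (Finset.range A) n,
        max 0 (min (h * d + h) (b-a) - max (h * d) 0))
      ≤ volume (cantorC M (Finset.range A) 1 n ∩ Set.Icc 0 (b-a)) := by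
    rw [ENNReal.ofReal_sum_of_nonneg (fun d _ => le_max_left 0 _)]
    have step : ∀ d : ℕ, ENNReal.ofReal (max 0 (min (h * d + h) (b-a) - max (h * d) 0))
        ≤ volume (Set.Ico (h * d) (h * d + h) ∩ Set.Icc 0 (b-a)) := by
      intro d
      have hsub : Set.Ico (max (h * d) 0) (min (h * d + h) (b-a))
          ⊆ Set.Ico (h * d) (h * d + h) ∩ Set.Icc 0 (b-a) := by
        intro x hx
        obtain ⟨hx1, hx2⟩ := hx
        refine ⟨⟨le_trans (le_max_left _ _) hx1, lt_of_lt_of_le hx2 (min_le_left _ _)⟩,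
          le_trans (le_max_right _ _) hx1, le_of_lt (lt_of_lt_of_le hx2 (min_le_right _ _))⟩
      refine le_trans ?_ (measure_mono hsub)
      rw [Real.volume_Ico, ofReal_max0]
    refine le_trans (Finset.sum_le_sum fun d _ => step d) ?_
    rw [← measure_biUnion_finset lodisj
      (fun d _ => (measurableSet_Ico.inter measurableSet_Icc))]
    apply measure_mono
    rw [cantorC_eq]
    intro x hx
    simp only [Set.mem_iUnion, Set.mem_inter_iff] at hx ⊢
    obtain ⟨d, hd, ⟨hx1, hx2⟩, hx3⟩ := hx
    exact ⟨⟨d, hd, hx1, le_of_lt hx2⟩, hx3⟩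
  refine le_trans up (le_trans ?_ lo)
  exact ENNReal.ofReal_le_ofReal (scaled_core hM hAM hS hcard n hh hab)

lemma cantorFun_nonneg (M A : ℕ) (S : Finset ℕ) (n : ℕ) (x : ℝ) :
    0 ≤ cantorFun M A S n x := by
  unfold cantorFun
  split_ifs
  · exact le_refl 0
  · have h1 : (0:ℝ) ≤ (volume (cantorC M S 1 n ∩ Set.Icc 0 x)).toReal :=
      ENNReal.toReal_nonneg
    have h2 : (0:ℝ) ≤ ((M : ℝ) / A) ^ n := by positivity
    exact mul_nonneg h1 h2

lemma vol_inter_ne_top (C : Set ℝ) (a b : ℝ) : volume (C ∩ Set.Icc a b) ≠ ⊤ := by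
  apply ne_of_lt
  refine lt_of_le_of_lt (measure_mono Set.inter_subset_right) ?_
  rw [Real.volume_Icc]
  exact ENNReal.ofReal_lt_top

theorem stmt_19 (M A : ℕ) (hM : 1 < M) (hA1 : 1 ≤ A) (hAM : A < M)
    (𝒜 : Finset ℕ) (h𝒜 : 𝒜 ⊆ Finset.range M) (hcard : 𝒜.card = A) (n : ℕ)
    (x y : ℝ) (hxy : x ≤ y) :
    cantorFun M A 𝒜 n y - cantorFun M A 𝒜 n x ≤
      cantorFun M A (Finset.range A) n (y - x) := by
  have hM0 : 0 < M := by omega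
  have hAM' : A ≤ M := by omega
  have hk : (0:ℝ) ≤ ((M : ℝ) / A) ^ n := by positivity
  by_cases hy : y ≤ 0
  · have hx : x ≤ 0 := le_trans hxy hy
    rw [cantorFun, if_pos hy, cantorFun, if_pos hx, sub_self]
    exact cantorFun_nonneg _ _ _ _ _
  · push_neg at hy
    by_cases hx : x ≤ 0
    · have hyx : ¬ (y - x ≤ 0) := by push_neg; linarith
      rw [cantorFun, if_neg (not_le.mpr hy), cantorFun, if_pos hx, sub_zero,
        cantorFun, if_neg hyx]
      apply mul_le_mul_of_nonneg_right _ hk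
      have kv : volume (cantorC M 𝒜 1 n ∩ Set.Icc 0 y)
          ≤ volume (cantorC M (Finset.range A) 1 n ∩ Set.Icc 0 (y - x)) := by
        have v1 := vol_le hM0 hAM' h𝒜 hcard n (le_of_lt hy)
        rw [sub_zero] at v1
        refine le_trans v1 (measure_mono ?_)
        apply Set.inter_subset_inter_right
        apply Set.Icc_subset_Icc_right
        linarith
      exact ENNReal.toReal_mono (vol_inter_ne_top _ _ _) kv
    · push_neg at hx
      by_cases hyx : y - x ≤ 0
      · have hxy' : x = y := by linarith
        subst hxy'
        rw [sub_self]
        exact cantorFun_nonneg _ _ _ _ _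
      · push_neg at hyx
        rw [cantorFun, if_neg (not_le.mpr hy), cantorFun, if_neg (not_le.mpr hx),
          cantorFun, if_neg (not_le.mpr hyx)]
        rw [← sub_mul]
        apply mul_le_mul_of_nonneg_right _ hk
        set C := cantorC M 𝒜 1 n
        have hsplit : volume (C ∩ Set.Icc 0 y)
            ≤ volume (C ∩ Set.Icc 0 x) + volume (C ∩ Set.Icc x y) := by
          refine le_trans (measure_mono ?_) (measure_union_le _ _)
          intro t ht
          obtain ⟨htC, ht0, hty⟩ := ht
          rcases le_total t x with h | h
          · exact Or.inl ⟨htC, ht0, h⟩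
          · exact Or.inr ⟨htC, h, hty⟩
        have hb := vol_le hM0 hAM' h𝒜 hcard n hxy
        have f1 := vol_inter_ne_top C 0 y
        have f2 := vol_inter_ne_top C 0 x
        have f3 := vol_inter_ne_top C x y
        have f4 := vol_inter_ne_top (cantorC M (Finset.range A) 1 n) 0 (y - x)
        have key : (volume (C ∩ Set.Icc 0 y)).toReal
            ≤ (volume (C ∩ Set.Icc 0 x)).toReal
              + (volume (cantorC M (Finset.range A) 1 n ∩ Set.Icc 0 (y-x))).toReal := by
          have h1 : (volume (C ∩ Set.Icc 0 y)).toReal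
              ≤ (volume (C ∩ Set.Icc 0 x)).toReal + (volume (C ∩ Set.Icc x y)).toReal := by
            rw [← ENNReal.toReal_add f2 f3]
            apply ENNReal.toReal_mono _ hsplit
            exact ENNReal.add_ne_top.mpr ⟨f2, f3⟩
          have h2 : (volume (C ∩ Set.Icc x y)).toReal
              ≤ (volume (cantorC M (Finset.range A) 1 n ∩ Set.Icc 0 (y-x))).toReal :=
            ENNReal.toReal_mono f4 hb
          linarith
        linarith
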